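/- Let 0 < q < 1 and λ ∈ ℝ. Then for every t > 0, the left-sided Caputo fractional derivative of order q of the function s ↦ E_q(λ s^q) equals λ E_q(λ t^q); explicitly, (1/Γ(1−q)) ∫_0^t (t−s)^{−q} (d/ds)[E_q(λ s^q)] ds = λ E_q(λ t^q). -/

import Mathlib

open Real intervalIntegral

/-- The Mittag-Leffler function `E_q(z) = ∑ₙ zⁿ / Γ(q n + 1)`. -/
noncomputable def mittagLeffler (q z : ℝ) : ℝ :=
  ∑' n : ℕ, z ^ n / Real.Gamma (q * n + 1)

namespace CaputoMLAux

open Filter MeasureTheory Set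

lemma gamma_le {q : ℝ} (hq0 : 0 < q) (hq1 : q < 1) {y : ℝ} (hy : 0 < y) :
    y * Real.Gamma y ≤ Real.Gamma (y + q) * (y + q) ^ (1 - q) := by
  have hyq : 0 < y + q := by linarith
  have hG : 0 < Real.Gamma (y + q) := Real.Gamma_pos_of_pos hyq
  have h1 : Real.Gamma (y + 1) ≤ Real.Gamma (y + q) ^ q * Real.Gamma (y + q + 1) ^ (1 - q) := by
    have h := Real.Gamma_mul_add_mul_le_rpow_Gamma_mul_rpow_Gamma (s := y + q) (t := y + q + 1)
      (a := q) (b := 1 - q) hyq (by linarith) hq0 (by linarith) (by ring)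
    have e : q * (y + q) + (1 - q) * (y + q + 1) = y + 1 := by ring
    rwa [e] at h
  rw [Real.Gamma_add_one hy.ne'] at h1
  have h3 : Real.Gamma (y + q + 1) ^ (1 - q)
      = (y + q) ^ (1 - q) * Real.Gamma (y + q) ^ (1 - q) := by
    rw [Real.Gamma_add_one hyq.ne', Real.mul_rpow hyq.le hG.le]
  have h2 : Real.Gamma (y + q) ^ q * Real.Gamma (y + q) ^ (1 - q) = Real.Gamma (y + q) := by
    rw [← Real.rpow_add hG]; norm_num
  calc y * Real.Gamma y ≤ _ := h1
    _ = Real.Gamma (y + q) * (y + q) ^ (1 - q) := by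
        rw [h3, mul_left_comm, h2, mul_comm]

lemma summable_aux {q : ℝ} (hq0 : 0 < q) (hq1 : q < 1) {c : ℝ} (hc : 0 ≤ c) :
    Summable (fun n : ℕ => ((n : ℝ) + 1) * c ^ n / Real.Gamma (q * n + 1)) := by
  apply summable_of_ratio_norm_eventually_le (r := 1/2) (by norm_num)
  have h1 : Tendsto (fun n : ℕ => q * (n : ℝ) + 1) atTop atTop :=
    tendsto_atTop_add_const_right _ 1 (tendsto_natCast_atTop_atTop.const_mul_atTop hq0)
  have htend : Tendsto (fun n : ℕ => 4 * c * (q * (n : ℝ) + 1) ^ (-q)) atTop (nhds 0) := by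
    have h2 := ((tendsto_rpow_neg_atTop hq0).comp h1).const_mul (4 * c)
    simpa using h2
  filter_upwards [htend.eventually_le_const (by norm_num : (0:ℝ) < 1/2)] with n hsm
  set y : ℝ := q * n + 1 with hydef
  have hy1 : (1:ℝ) ≤ y := by
    have : (0:ℝ) ≤ q * n := by positivity
    simp [hydef]; linarith
  have hy0 : (0:ℝ) < y := by linarith
  have hyq : (0:ℝ) < y + q := by linarith
  have hA : 0 < Real.Gamma y := Real.Gamma_pos_of_pos hy0
  have hB : 0 < Real.Gamma (y + q) := Real.Gamma_pos_of_pos hyq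
  have hyn : (0:ℝ) < y ^ (-q) := Real.rpow_pos_of_pos hy0 _
  -- identify the Gamma argument at n+1
  have harg : q * ((n : ℝ) + 1) + 1 = y + q := by rw [hydef]; ring
  -- r := (y+q)^(1-q) ≤ 2 * y * y^(-q)
  have hr : (y + q) ^ (1 - q) ≤ 2 * y * y ^ (-q) := by
    have e1 : (y + q) ^ (1 - q) = (y + q) * (y + q) ^ (-q) := by
      rw [show (1 - q : ℝ) = 1 + -q by ring, Real.rpow_add hyq, Real.rpow_one]
    have e2 : (y + q) ^ (-q) ≤ y ^ (-q) :=
      Real.rpow_le_rpow_of_nonpos hy0 (by linarith) (by linarith)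
    have e3 : y + q ≤ 2 * y := by linarith
    calc (y + q) ^ (1 - q) = (y + q) * (y + q) ^ (-q) := e1
      _ ≤ (2 * y) * (y ^ (-q)) := by
          apply mul_le_mul e3 e2 (Real.rpow_nonneg hyq.le _) (by linarith)
      _ = 2 * y * y ^ (-q) := by ring
  have hGa := gamma_le hq0 hq1 hy0
  have hA' : Real.Gamma y ≤ 2 * y ^ (-q) * Real.Gamma (y + q) := by
    have h := hGa.trans (mul_le_mul_of_nonneg_left hr hB.le)
    have h' : y * Real.Gamma y ≤ y * (2 * y ^ (-q) * Real.Gamma (y + q)) := by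
      calc y * Real.Gamma y ≤ Real.Gamma (y + q) * (2 * y * y ^ (-q)) := h
        _ = y * (2 * y ^ (-q) * Real.Gamma (y + q)) := by ring
    exact le_of_mul_le_mul_left h' hy0
  -- now the ratio bound
  have hcyn : c * y ^ (-q) ≤ 1 / 8 := by
    have : 4 * c * y ^ (-q) ≤ 1 / 2 := hsm
    nlinarith
  have hnn : (0:ℝ) ≤ ((n:ℝ) + 1 + 1) * c ^ (n + 1) := by positivity
  have hterm1 : (0:ℝ) ≤ ((n:ℝ) + 1 + 1) * c ^ (n + 1) / Real.Gamma (q * (n + 1) + 1) := by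
    push_cast [harg]
    positivity
  rw [Real.norm_of_nonneg, Real.norm_of_nonneg (by positivity)]
  swap
  · positivity
  push_cast [harg]
  rw [← mul_div_assoc, div_le_div_iff₀ hB hA]
  have step1 : ((n:ℝ) + 1 + 1) * c ^ (n + 1) * Real.Gamma y
      ≤ ((n:ℝ) + 1 + 1) * c ^ (n + 1) * (2 * y ^ (-q) * Real.Gamma (y + q)) :=
    mul_le_mul_of_nonneg_left hA' hnn
  have step2 : ((n:ℝ) + 1 + 1) * c ^ (n + 1) * (2 * y ^ (-q) * Real.Gamma (y + q))
      = (c * y ^ (-q)) * (2 * ((n:ℝ) + 2)) * (c ^ n * Real.Gamma (y + q)) := by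
    ring
  have step3 : (c * y ^ (-q)) * (2 * ((n:ℝ) + 2)) * (c ^ n * Real.Gamma (y + q))
      ≤ (1/8) * (2 * ((n:ℝ) + 2)) * (c ^ n * Real.Gamma (y + q)) := by
    have h2n : (0:ℝ) ≤ 2 * ((n:ℝ) + 2) := by positivity
    have h3n : (0:ℝ) ≤ c ^ n * Real.Gamma (y + q) := by positivity
    apply mul_le_mul_of_nonneg_right (mul_le_mul_of_nonneg_right hcyn h2n) h3n
  have step4 : (1/8 : ℝ) * (2 * ((n:ℝ) + 2)) * (c ^ n * Real.Gamma (y + q))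
      ≤ ((n:ℝ) + 1) * c ^ n * (1/2) * Real.Gamma (y + q) := by
    have : (1/8 : ℝ) * (2 * ((n:ℝ) + 2)) ≤ ((n:ℝ) + 1) * (1/2) := by nlinarith [Nat.cast_nonneg (α := ℝ) n]
    nlinarith [mul_le_mul_of_nonneg_right this (by positivity : (0:ℝ) ≤ c ^ n * Real.Gamma (y + q))]
  calc ((n:ℝ) + 1 + 1) * c ^ (n + 1) * Real.Gamma y
      ≤ _ := step1
    _ = _ := step2
    _ ≤ _ := step3
    _ ≤ ((n:ℝ) + 1) * c ^ n * (1/2) * Real.Gamma (y + q) := step4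
    _ = 1/2 * (((n:ℝ) + 1) * c ^ n) * Real.Gamma (y + q) := by ring


lemma summable_ml {q : ℝ} (hq0 : 0 < q) (hq1 : q < 1) (z : ℝ) :
    Summable (fun n : ℕ => z ^ n / Real.Gamma (q * n + 1)) := by
  refine Summable.of_norm_bounded (summable_aux hq0 hq1 (abs_nonneg z)) fun n => ?_
  have hG : 0 < Real.Gamma (q * n + 1) := Real.Gamma_pos_of_pos (by positivity)
  rw [norm_div, Real.norm_of_nonneg hG.le, norm_pow, Real.norm_eq_abs]
  gcongr
  nlinarith [abs_nonneg z, pow_nonneg (abs_nonneg z) n, Nat.cast_nonneg (α := ℝ) n]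

/-- coefficient of the termwise derivative -/
noncomputable def mlCoef (q lam : ℝ) (n : ℕ) : ℝ := lam ^ n * (q * n) / Real.Gamma (q * n + 1)

lemma hasDerivAt_term {q lam : ℝ} (hq0 : 0 < q) (n : ℕ) {x : ℝ} (hx : 0 < x) :
    HasDerivAt (fun u : ℝ => (lam * u ^ q) ^ n / Real.Gamma (q * n + 1))
      (mlCoef q lam n * x ^ (q * n - 1)) x := by
  have h1 : HasDerivAt (fun u : ℝ => u ^ (q * n)) (q * n * x ^ (q * n - 1)) x :=
    Real.hasDerivAt_rpow_const (Or.inl hx.ne')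
  have h2 : HasDerivAt (fun u : ℝ => lam ^ n * u ^ (q * n) / Real.Gamma (q * n + 1))
      (mlCoef q lam n * x ^ (q * n - 1)) x := by
    have := (h1.const_mul (lam ^ n)).div_const (Real.Gamma (q * n + 1))
    exact this.congr_deriv (by unfold mlCoef; ring)
  apply h2.congr_of_eventuallyEq
  filter_upwards [isOpen_Ioi.mem_nhds hx] with u (hu : 0 < u)
  rw [mul_pow, ← Real.rpow_natCast (u ^ q) n, ← Real.rpow_mul hu.le]

lemma hasDerivAt_ml {q lam : ℝ} (hq0 : 0 < q) (hq1 : q < 1) {s : ℝ} (hs : 0 < s) :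
    HasDerivAt (fun u => mittagLeffler q (lam * u ^ q))
      (∑' n : ℕ, mlCoef q lam n * s ^ (q * n - 1)) s := by
  have hKey : ∀ y ∈ Ioo (s/2) (s+1), HasDerivAt (fun u => mittagLeffler q (lam * u ^ q))
      (∑' n : ℕ, mlCoef q lam n * y ^ (q * n - 1)) y := by
    intro y hy
    have hhalf : 0 < s / 2 := by linarith
    apply hasDerivAt_tsum_of_isPreconnected
      (u := fun n : ℕ => (2 / s) * (((n:ℝ) + 1) * (|lam| * (s+1) ^ q) ^ n / Real.Gamma (q * n + 1)))
      (((summable_aux hq0 hq1 (by positivity)).mul_left _)) isOpen_Ioo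
      (isPreconnected_Ioo) (fun n z hz => hasDerivAt_term hq0 n (lt_trans hhalf hz.1))
      ?_ (show s ∈ Ioo (s/2) (s+1) by constructor <;> linarith)
      ?_ hy
    · intro n z hz
      obtain ⟨hz1, hz2⟩ := hz
      have hz0 : 0 < z := lt_trans hhalf hz1
      have hG : 0 < Real.Gamma (q * n + 1) := Real.Gamma_pos_of_pos (by positivity)
      have hzq : z ^ (q * n - 1) = z ^ (q * n) / z := by
        rw [show q * (n:ℝ) - 1 = q * n + (-1) by ring, Real.rpow_add hz0, Real.rpow_neg_one]
        ring
      have hb1 : z ^ (q * (n:ℕ) : ℝ) ≤ ((s+1) ^ q) ^ n := by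
        rw [Real.rpow_mul (le_of_lt hz0), Real.rpow_natCast]
        have := Real.rpow_le_rpow hz0.le (show z ≤ s + 1 by linarith) hq0.le
        gcongr <;> first | exact Real.rpow_nonneg hz0.le q | exact this
      have hb2 : z⁻¹ ≤ 2 / s := by
        have h := inv_anti₀ hhalf hz1.le
        rwa [inv_div] at h
      have habs : |mlCoef q lam n| = |lam| ^ n * (q * n) / Real.Gamma (q * n + 1) := by
        rw [mlCoef, abs_div, abs_of_pos hG, abs_mul, abs_pow,
          abs_of_nonneg (by positivity : (0:ℝ) ≤ q * n)]
      rw [Real.norm_eq_abs, abs_mul, habs, abs_of_pos (Real.rpow_pos_of_pos hz0 _), hzq,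
        div_eq_mul_inv (z ^ (q * (n:ℕ) : ℝ)) z]
      have hqn : q * (n:ℝ) ≤ (n:ℝ) + 1 := by nlinarith [Nat.cast_nonneg (α := ℝ) n]
      have key : |lam| ^ n * (q * n) / Real.Gamma (q * n + 1) * (z ^ (q * (n:ℕ) : ℝ) * z⁻¹)
          ≤ |lam| ^ n * ((n:ℝ) + 1) / Real.Gamma (q * n + 1) * (((s+1) ^ q) ^ n * (2 / s)) := by
        have hz0' : (0:ℝ) ≤ z⁻¹ := by positivity
        gcongr
      refine key.trans (le_of_eq ?_)
      rw [mul_pow]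
      ring
    · exact summable_ml hq0 hq1 (lam * s ^ q)
  exact hKey s ⟨by linarith, by linarith⟩


lemma beta_real {u v : ℝ} (hu : 0 < u) (hv : 0 < v) :
    ∫ x in (0:ℝ)..1, x ^ (u - 1) * (1 - x) ^ (v - 1) =
      Real.Gamma u * Real.Gamma v / Real.Gamma (u + v) := by
  have huv : 0 < Real.Gamma (u + v) := Real.Gamma_pos_of_pos (by linarith)
  have h := Complex.Gamma_mul_Gamma_eq_betaIntegral (s := (u:ℂ)) (t := (v:ℂ))
    (by simpa using hu) (by simpa using hv)
  have h2 : Complex.betaIntegral u v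
      = ((∫ x in (0:ℝ)..1, x ^ (u - 1) * (1 - x) ^ (v - 1) : ℝ) : ℂ) := by
    rw [Complex.betaIntegral, ← intervalIntegral.integral_ofReal]
    refine intervalIntegral.integral_congr fun x hx => ?_
    rw [uIcc_of_le (zero_le_one' ℝ)] at hx
    rw [Complex.ofReal_mul, Complex.ofReal_cpow hx.1, Complex.ofReal_cpow (by linarith [hx.2])]
    push_cast
    ring
  rw [h2, ← Complex.ofReal_add, Complex.Gamma_ofReal, Complex.Gamma_ofReal,
    Complex.Gamma_ofReal, ← Complex.ofReal_mul, ← Complex.ofReal_mul] at h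
  have h3 := Complex.ofReal_inj.mp h
  field_simp
  linarith [h3]

lemma integral_term {q : ℝ} (hq0 : 0 < q) (hq1 : q < 1) {t a : ℝ} (ht : 0 < t) (ha : 0 < a) :
    ∫ s in (0:ℝ)..t, (t - s) ^ (-q) * s ^ (a - 1) =
      Real.Gamma a * Real.Gamma (1 - q) / Real.Gamma (a + (1 - q)) * t ^ (a - q) := by
  have key : (∫ s in (0:ℝ)..t, (t - s) ^ (-q) * s ^ (a - 1))
      = t • ∫ x in (0:ℝ)..1, (t - t * x) ^ (-q) * (t * x) ^ (a - 1) := by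
    rw [intervalIntegral.smul_integral_comp_mul_left
      (fun s => (t - s) ^ (-q) * s ^ (a - 1)) t, mul_zero, mul_one]
  rw [key]
  have congr1 : (∫ x in (0:ℝ)..1, (t - t * x) ^ (-q) * (t * x) ^ (a - 1))
      = ∫ x in (0:ℝ)..1, (t ^ (-q) * t ^ (a - 1)) * (x ^ (a - 1) * (1 - x) ^ (-q)) := by
    refine intervalIntegral.integral_congr fun x hx => ?_
    rw [uIcc_of_le (zero_le_one' ℝ)] at hx
    have h1x : (0:ℝ) ≤ 1 - x := by linarith [hx.2]
    rw [show t - t * x = t * (1 - x) by ring, Real.mul_rpow ht.le h1x,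
      Real.mul_rpow ht.le hx.1]
    ring
  rw [congr1, intervalIntegral.integral_const_mul]
  have congr2 : (∫ x in (0:ℝ)..1, x ^ (a - 1) * (1 - x) ^ (-q))
      = ∫ x in (0:ℝ)..1, x ^ (a - 1) * (1 - x) ^ ((1 - q) - 1) := by
    norm_num
  rw [congr2, beta_real ha (by linarith)]
  rw [smul_eq_mul, ← mul_assoc, ← mul_assoc]
  have : t * t ^ (-q) * t ^ (a - 1) = t ^ (a - q) := by
    nth_rewrite 1 [← Real.rpow_one t]
    rw [← Real.rpow_add ht, ← Real.rpow_add ht]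
    congr 1
    ring
  rw [this]
  ring

lemma intble {q : ℝ} (hq0 : 0 < q) (hq1 : q < 1) {t a : ℝ} (ht : 0 < t) (ha : 0 < a) :
    IntervalIntegrable (fun s => (t - s) ^ (-q) * s ^ (a - 1)) volume 0 t := by
  have h1 : IntervalIntegrable (fun s => s ^ (a - 1) * (t - s) ^ (-q)) volume 0 (t/2) := by
    apply (intervalIntegrable_rpow' (by linarith)).mul_continuousOn
    apply ContinuousOn.rpow_const (by fun_prop)
    intro x hx
    rw [uIcc_of_le (by linarith : (0:ℝ) ≤ t/2)] at hx
    left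
    have := hx.2
    intro hcon
    have : t = x := by linarith [sub_eq_zero.mp hcon]
    linarith
  have h1' : IntervalIntegrable (fun s => (t - s) ^ (-q) * s ^ (a - 1)) volume 0 (t/2) := by
    have := h1
    simp_rw [mul_comm] at this
    exact this
  have h2 : IntervalIntegrable (fun s => (t - s) ^ (-q) * s ^ (a - 1)) volume (t/2) t := by
    have hbase : IntervalIntegrable (fun x : ℝ => x ^ (-q)) volume 0 (t/2) :=
      intervalIntegrable_rpow' (by linarith)
    have hc := hbase.comp_sub_left t
    rw [sub_zero] at hc
    have hc' : IntervalIntegrable (fun x : ℝ => (t - x) ^ (-q)) volume (t/2) t := by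
      have : t - t / 2 = t / 2 := by ring
      rw [this] at hc
      exact hc.symm
    apply hc'.mul_continuousOn
    apply ContinuousOn.rpow_const (by fun_prop)
    intro x hx
    rw [uIcc_of_le (by linarith : t/2 ≤ t)] at hx
    exact Or.inl (lt_of_lt_of_le (by linarith) hx.1).ne'
  exact h1'.trans h2


lemma abs_mlCoef (q lam : ℝ) (hq0 : 0 < q) (n : ℕ) : |mlCoef q lam n| = mlCoef q |lam| n := by
  have hG : 0 < Real.Gamma (q * n + 1) := Real.Gamma_pos_of_pos (by positivity)
  rw [mlCoef, mlCoef, abs_div, abs_mul, abs_pow, abs_of_pos hG,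
    abs_of_nonneg (by positivity : (0:ℝ) ≤ q * n)]

lemma integral_piece {q lam t : ℝ} (hq0 : 0 < q) (hq1 : q < 1) (ht : 0 < t) (m : ℕ) :
    (∫ s in Ioc (0:ℝ) t, (t - s) ^ (-q) * (mlCoef q lam (m + 1) * s ^ (q * ((m + 1 : ℕ) : ℝ) - 1)))
      = Real.Gamma (1 - q) * lam * ((lam * t ^ q) ^ m / Real.Gamma (q * m + 1)) := by
  have ha : (0:ℝ) < q * ((m + 1 : ℕ) : ℝ) := by positivity
  set a : ℝ := q * ((m + 1 : ℕ) : ℝ) with ha_def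
  have hGa : 0 < Real.Gamma a := Real.Gamma_pos_of_pos ha
  have hGm : 0 < Real.Gamma (q * m + 1) := Real.Gamma_pos_of_pos (by positivity)
  have e1 : ∀ s : ℝ, (t - s) ^ (-q) * (mlCoef q lam (m + 1) * s ^ (a - 1))
      = mlCoef q lam (m + 1) * ((t - s) ^ (-q) * s ^ (a - 1)) := fun s => mul_left_comm _ _ _
  simp_rw [e1]
  rw [MeasureTheory.integral_const_mul, ← intervalIntegral.integral_of_le ht.le,
    integral_term hq0 hq1 ht ha]
  have e2 : a + (1 - q) = q * m + 1 := by rw [ha_def]; push_cast; ring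
  have e3 : t ^ (a - q) = (t ^ q) ^ m := by
    rw [show a - q = q * (m:ℝ) by rw [ha_def]; push_cast; ring, Real.rpow_mul ht.le,
      Real.rpow_natCast]
  rw [e2, e3]
  have e4 : mlCoef q lam (m + 1) = lam ^ (m + 1) * a / Real.Gamma (a + 1) := by
    rw [mlCoef, ha_def]
  rw [e4, Real.Gamma_add_one ha.ne', mul_pow]
  field_simp
  ring


end CaputoMLAux

open CaputoMLAux Filter MeasureTheory Set in
/-- The left-sided Caputo fractional derivative of order `q` of
`s ↦ E_q(λ s^q)` equals `λ E_q(λ t^q)` for `t > 0`. -/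
theorem caputo_deriv_mittagLeffler
    (q lam : ℝ) (hq0 : 0 < q) (hq1 : q < 1) :
    ∀ t : ℝ, 0 < t →
      (1 / Real.Gamma (1 - q)) *
          ∫ s in (0:ℝ)..t, (t - s) ^ (-q) * deriv (fun u => mittagLeffler q (lam * u ^ q)) s =
        lam * mittagLeffler q (lam * t ^ q) := by
  intro t ht
  have hΓpos : 0 < Real.Gamma (1 - q) := Real.Gamma_pos_of_pos (by linarith)
  -- Step 1: replace integrand by the sum of the termwise pieces
  have hml : ∀ s ∈ Ioc (0:ℝ) t,
      (t - s) ^ (-q) * deriv (fun u => mittagLeffler q (lam * u ^ q)) s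
        = ∑' n : ℕ, (t - s) ^ (-q) * (mlCoef q lam n * s ^ (q * n - 1)) := by
    intro s hs
    rw [(hasDerivAt_ml hq0 hq1 hs.1).deriv, ← tsum_mul_left]
  rw [intervalIntegral.integral_of_le ht.le,
    MeasureTheory.setIntegral_congr_fun measurableSet_Ioc hml]
  -- integrability of each piece
  have hInt : ∀ n : ℕ, Integrable
      (fun s => (t - s) ^ (-q) * (mlCoef q lam n * s ^ (q * n - 1)))
      (volume.restrict (Ioc 0 t)) := by
    intro n
    match n with
    | 0 =>
      have e : (fun s : ℝ => (t - s) ^ (-q) * (mlCoef q lam 0 * s ^ (q * (0:ℕ) - 1)))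
          = fun _ => (0:ℝ) := by funext s; simp [mlCoef]
      rw [e]
      exact integrable_zero _ _ _
    | (m + 1) =>
      have ha : (0:ℝ) < q * ((m + 1 : ℕ) : ℝ) := by positivity
      have h := ((intervalIntegrable_iff_integrableOn_Ioc_of_le ht.le).mp
        (intble hq0 hq1 ht ha)).const_mul (mlCoef q lam (m + 1))
      exact h.congr (Filter.Eventually.of_forall fun s => mul_left_comm _ _ _)
  -- norm equality
  have hnormeq : ∀ n : ℕ,
      (∫ s in Ioc (0:ℝ) t, ‖(t - s) ^ (-q) * (mlCoef q lam n * s ^ (q * n - 1))‖)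
        = ∫ s in Ioc (0:ℝ) t, (t - s) ^ (-q) * (mlCoef q |lam| n * s ^ (q * n - 1)) := by
    intro n
    refine MeasureTheory.setIntegral_congr_fun measurableSet_Ioc fun s hs => ?_
    rw [norm_mul, norm_mul, Real.norm_of_nonneg (Real.rpow_nonneg (by linarith [hs.2]) _),
      Real.norm_of_nonneg (Real.rpow_nonneg hs.1.le _), Real.norm_eq_abs, abs_mlCoef q lam hq0]
  -- summability of the norms
  have hNorm : Summable (fun n : ℕ =>
      ∫ s in Ioc (0:ℝ) t, ‖(t - s) ^ (-q) * (mlCoef q lam n * s ^ (q * n - 1))‖) := by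
    simp_rw [hnormeq]
    apply (summable_nat_add_iff 1).mp
    apply Summable.congr (((summable_ml hq0 hq1 (|lam| * t ^ q)).mul_left
      (Real.Gamma (1 - q) * |lam|)))
    intro m
    rw [integral_piece hq0 hq1 ht m]
  rw [← MeasureTheory.integral_tsum_of_summable_integral_norm hInt hNorm]
  have hsummg : Summable (fun n : ℕ =>
      ∫ s in Ioc (0:ℝ) t, (t - s) ^ (-q) * (mlCoef q lam n * s ^ (q * n - 1))) :=
    Summable.of_norm_bounded hNorm fun n => MeasureTheory.norm_integral_le_integral_norm _
  rw [Summable.tsum_eq_zero_add hsummg]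
  have hg0 : (∫ s in Ioc (0:ℝ) t, (t - s) ^ (-q) * (mlCoef q lam 0 * s ^ (q * (0:ℕ) - 1))) = 0 := by
    simp [mlCoef]
  rw [hg0, zero_add]
  have hc : ∀ m : ℕ,
      (∫ s in Ioc (0:ℝ) t, (t - s) ^ (-q) * (mlCoef q lam (m + 1) * s ^ (q * ((m + 1:ℕ):ℝ) - 1)))
        = Real.Gamma (1 - q) * lam * ((lam * t ^ q) ^ m / Real.Gamma (q * m + 1)) :=
    fun m => integral_piece hq0 hq1 ht m
  rw [tsum_congr hc, tsum_mul_left]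
  rw [show mittagLeffler q (lam * t ^ q) = ∑' n : ℕ, (lam * t ^ q) ^ n / Real.Gamma (q * n + 1)
    from rfl]
  field_simp
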